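/- Fix integers M ≥ 1, s ≥ 0, a real P > 0 and α ∈ [0,1]. Let h_1, g_1,…,g_s, z be independent standard complex Gaussian vectors in ℂ^M. Then P( Re⟨√P·Σ_{i=1}^{s} g_i + z, h_1⟩ > α·√P·‖h_1‖² ) ≤ ( 1 + P·α²/(Ps+1) )^{−M}. -/

import Mathlib

open MeasureTheory ProbabilityTheory

/-- Standard complex Gaussian measure on `ℂ^M`: the `2M` real coordinates are
i.i.d. real Gaussian `N(0, 1/2)`. -/
noncomputable def stdCGaussian (M : ℕ) : Measure (Fin M → ℂ) :=
  (Measure.pi fun _ : Fin M =>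
    (gaussianReal 0 (1/2)).prod (gaussianReal 0 (1/2))).map
    (fun f i => ⟨(f i).1, (f i).2⟩)

/-- Complex inner product `⟨x, v⟩ = ∑ m, x m * conj (v m)`. -/
noncomputable def cip {M : ℕ} (x v : Fin M → ℂ) : ℂ :=
  ∑ m, x m * (starRingEnd ℂ) (v m)

/-- Squared Euclidean norm `‖v‖² = ∑ m, |v m|²`. -/
noncomputable def cnSq {M : ℕ} (v : Fin M → ℂ) : ℝ :=
  ∑ m, Complex.normSq (v m)

/-- The standard normal tail function `Q`. -/
noncomputable def Qfun (x : ℝ) : ℝ :=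
  ∫ t in Set.Ioi x, (Real.sqrt (2 * Real.pi))⁻¹ * Real.exp (-t ^ 2 / 2)

open Real
open scoped NNReal ENNReal

section MFAux

lemma integral_exp_quad (b : ℝ) (hb : 0 < b) (a : ℝ) :
    ∫ x : ℝ, Real.exp (-b*x^2 + a*x) = Real.sqrt (π/b) * Real.exp (a^2/(4*b)) := by
  have h : ∀ x : ℝ, Real.exp (-b*x^2 + a*x)
      = Real.exp (a^2/(4*b)) * Real.exp (-b*(x - a/(2*b))^2) := by
    intro x
    rw [← Real.exp_add]; congr 1; field_simp; ring
  simp_rw [h, integral_const_mul]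
  rw [show (fun x : ℝ => Real.exp (-b*(x - a/(2*b))^2)) = fun x => (fun y => Real.exp (-b*y^2)) (x - a/(2*b)) from rfl]
  rw [integral_sub_right_eq_self (fun y : ℝ => Real.exp (-b*y^2)) (a/(2*b))]
  rw [integral_gaussian]
  ring

lemma integrable_exp_quad (b : ℝ) (hb : 0 < b) (a : ℝ) :
    Integrable (fun x : ℝ => Real.exp (-b*x^2 + a*x)) := by
  have h : ∀ x : ℝ, Real.exp (-b*x^2 + a*x)
      = Real.exp (a^2/(4*b)) * Real.exp (-b*(x - a/(2*b))^2) := by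
    intro x
    rw [← Real.exp_add]; congr 1; field_simp; ring
  simp_rw [h]
  exact ((integrable_exp_neg_mul_sq hb).comp_sub_right (a/(2*b))).const_mul _

lemma lintegral_exp_quad_gaussian (b a : ℝ) (hb : b < 1) :
    ∫⁻ x, ENNReal.ofReal (Real.exp (b*x^2 + a*x)) ∂(gaussianReal 0 (1/2))
      = ENNReal.ofReal ((Real.sqrt (1-b))⁻¹ * Real.exp (a^2/(4*(1-b)))) := by
  have h2 : ((1/2 : ℝ≥0) : ℝ) = 1/2 := by norm_num
  have hmeas : Measurable fun x : ℝ => ENNReal.ofReal (Real.exp (b*x^2 + a*x)) := by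
    fun_prop
  rw [gaussianReal_of_var_ne_zero _ (by norm_num : (1/2 : ℝ≥0) ≠ 0),
    lintegral_withDensity_eq_lintegral_mul _ (measurable_gaussianPDF _ _) hmeas]
  have hpdf : ∀ x : ℝ, gaussianPDF 0 (1/2) x * ENNReal.ofReal (Real.exp (b*x^2 + a*x))
      = ENNReal.ofReal ((Real.sqrt π)⁻¹ * Real.exp (-(1-b)*x^2 + a*x)) := by
    intro x
    rw [gaussianPDF, ← ENNReal.ofReal_mul (gaussianPDFReal_nonneg _ _ _)]
    congr 1
    rw [gaussianPDFReal]
    rw [h2]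
    rw [show (2 : ℝ) * π * (1/2) = π by ring, mul_assoc, ← Real.exp_add]
    congr 2
    ring
  simp only [Pi.mul_apply, hpdf]
  rw [← ofReal_integral_eq_lintegral_ofReal
    ((integrable_exp_quad (1-b) (by linarith) a).const_mul _)
    (Filter.Eventually.of_forall fun x => by positivity)]
  rw [integral_const_mul, integral_exp_quad (1-b) (by linarith) a]
  congr 1
  rw [Real.sqrt_div (le_of_lt pi_pos) (1-b), ← mul_assoc, div_eq_mul_inv, ← mul_assoc,
    inv_mul_cancel₀ (by positivity : Real.sqrt π ≠ 0), one_mul]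

lemma lintegral_pi_prod {n : ℕ} {E : Type*} [MeasurableSpace E] (μ : Measure E)
    [SigmaFinite μ] (f : Fin n → E → ℝ≥0∞) (hf : ∀ i, Measurable (f i)) :
    ∫⁻ x : Fin n → E, ∏ i, f i (x i) ∂(Measure.pi fun _ => μ)
      = ∏ i, ∫⁻ y, f i y ∂μ := by
  induction n with
  | zero =>
      simp [lintegral_const, Measure.pi_univ]
  | succ n ih =>
      have hmp := (measurePreserving_piFinSuccAbove (fun _ : Fin (n+1) => μ) 0).symm
      have hmeas : Measurable fun x : Fin (n+1) → E => ∏ i, f i (x i) :=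
        Finset.measurable_prod _ fun i _ => (hf i).comp (measurable_pi_apply i)
      rw [← hmp.lintegral_comp hmeas]
      have hsymm : ∀ (a : E × (Fin n → E)) (i : Fin (n+1)),
          ((MeasurableEquiv.piFinSuccAbove (fun _ : Fin (n+1) => E) 0).symm a) i
            = (Fin.cons a.1 a.2 : Fin (n+1) → E) i := by
        intro a i
        simp [MeasurableEquiv.piFinSuccAbove, Fin.insertNthEquiv, Fin.insertNth_zero,
          Fin.cons_zero, Fin.cons_succ]
      simp_rw [hsymm, Fin.prod_univ_succ, Fin.cons_zero, Fin.cons_succ]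
      rw [lintegral_prod_mul (f := fun y => f 0 y)
        (g := fun y : Fin n → E => ∏ x : Fin n, f x.succ (y x)) (hf 0).aemeasurable
        ((Finset.measurable_prod (Finset.univ) (fun i _ =>
          (hf i.succ).comp (measurable_pi_apply i))).aemeasurable)]
      rw [ih (fun i => f i.succ) (fun i => hf i.succ)]

lemma lintegral_exp_lin_gaussian (a : ℝ) :
    ∫⁻ x, ENNReal.ofReal (Real.exp (a*x)) ∂(gaussianReal 0 (1/2))
      = ENNReal.ofReal (Real.exp (a^2/4)) := by
  have := lintegral_exp_quad_gaussian 0 a (by norm_num)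
  simpa using this

lemma lintegral_exp_neg_sq_gaussian (t : ℝ) (ht : 0 ≤ t) :
    ∫⁻ x, ENNReal.ofReal (Real.exp (-(t*x^2))) ∂(gaussianReal 0 (1/2))
      = ENNReal.ofReal ((Real.sqrt (1+t))⁻¹) := by
  have := lintegral_exp_quad_gaussian (-t) 0 (by linarith)
  simp only [zero_mul, add_zero, zero_pow, sub_neg_eq_add, neg_mul] at this
  simpa [neg_mul, sub_neg_eq_add, add_comm] using this

lemma lintegral_pi_exp_sum {n : ℕ} {E : Type*} [MeasurableSpace E] (μ : Measure E)
    [SigmaFinite μ] (f : Fin n → E → ℝ) (hf : ∀ i, Measurable (f i)) :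
    ∫⁻ x : Fin n → E, ENNReal.ofReal (Real.exp (∑ i, f i (x i))) ∂(Measure.pi fun _ => μ)
      = ∏ i, ∫⁻ y, ENNReal.ofReal (Real.exp (f i y)) ∂μ := by
  have h : ∀ x : Fin n → E, ENNReal.ofReal (Real.exp (∑ i, f i (x i)))
      = ∏ i, ENNReal.ofReal (Real.exp (f i (x i))) := by
    intro x
    rw [Real.exp_sum, ← ENNReal.ofReal_prod_of_nonneg]
    intro i _; positivity
  simp_rw [h]
  exact lintegral_pi_prod μ _ fun i =>
    ENNReal.measurable_ofReal.comp (Real.measurable_exp.comp (hf i))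

lemma lintegral_prod_exp_add {X Y : Type*} [MeasurableSpace X] [MeasurableSpace Y]
    (μ : Measure X) (ν : Measure Y) [SigmaFinite μ] [SigmaFinite ν]
    (f : X → ℝ) (g : Y → ℝ) (hf : Measurable f) (hg : Measurable g) :
    ∫⁻ p : X × Y, ENNReal.ofReal (Real.exp (f p.1 + g p.2)) ∂(μ.prod ν)
      = (∫⁻ x, ENNReal.ofReal (Real.exp (f x)) ∂μ)
        * ∫⁻ y, ENNReal.ofReal (Real.exp (g y)) ∂ν := by
  have h : ∀ p : X × Y, ENNReal.ofReal (Real.exp (f p.1 + g p.2))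
      = ENNReal.ofReal (Real.exp (f p.1)) * ENNReal.ofReal (Real.exp (g p.2)) := by
    intro p; rw [Real.exp_add, ENNReal.ofReal_mul (by positivity)]
  simp_rw [h]
  exact lintegral_prod_mul
    (ENNReal.measurable_ofReal.comp (Real.measurable_exp.comp hf)).aemeasurable
    (ENNReal.measurable_ofReal.comp (Real.measurable_exp.comp hg)).aemeasurable

lemma measurable_mkC : Measurable fun p : ℝ × ℝ => (⟨p.1, p.2⟩ : ℂ) := by
  have : (fun p : ℝ × ℝ => (⟨p.1, p.2⟩ : ℂ)) = fun p => (p.1 : ℂ) + (p.2 : ℂ) * Complex.I := by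
    funext p
    exact Complex.mk_eq_add_mul_I p.1 p.2
  rw [this]
  exact (Complex.measurable_ofReal.comp measurable_fst).add
    ((Complex.measurable_ofReal.comp measurable_snd).mul_const _)

lemma measurable_phi (M : ℕ) :
    Measurable fun (f : Fin M → ℝ × ℝ) (i : Fin M) => (⟨(f i).1, (f i).2⟩ : ℂ) :=
  measurable_pi_lambda _ fun i => measurable_mkC.comp (measurable_pi_apply i)

instance stdCGaussian_prob (M : ℕ) : IsProbabilityMeasure (stdCGaussian M) :=
  Measure.isProbabilityMeasure_map (measurable_phi M).aemeasurable

lemma prod_ofReal_exp {n : ℕ} (c : Fin n → ℝ) :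
    ∏ i, ENNReal.ofReal (Real.exp (c i)) = ENNReal.ofReal (Real.exp (∑ i, c i)) := by
  rw [Real.exp_sum, ← ENNReal.ofReal_prod_of_nonneg]
  intro i _; positivity

lemma measurable_cip_re {M : ℕ} (v : Fin M → ℂ) :
    Measurable fun x : Fin M → ℂ => (cip x v).re := by
  unfold cip
  exact Complex.measurable_re.comp <| Finset.measurable_sum _ fun m _ =>
    (measurable_pi_apply m).mul_const _

lemma key_lin (M : ℕ) (a : ℝ) (v : Fin M → ℂ) :
    ∫⁻ x, ENNReal.ofReal (Real.exp (a * (cip x v).re)) ∂(stdCGaussian M)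
      = ENNReal.ofReal (Real.exp (a^2 * cnSq v / 4)) := by
  have hm1 : Measurable fun x : Fin M → ℂ => ENNReal.ofReal (Real.exp (a * (cip x v).re)) :=
    ENNReal.measurable_ofReal.comp (Real.measurable_exp.comp
      ((measurable_cip_re v).const_mul a))
  rw [stdCGaussian, lintegral_map hm1 (measurable_phi M)]
  have hre : ∀ f : Fin M → ℝ × ℝ,
      a * (cip (fun i => (⟨(f i).1,(f i).2⟩:ℂ)) v).re
        = ∑ m, ((a * (v m).re) * (f m).1 + (a * (v m).im) * (f m).2) := by
    intro f
    rw [cip, Complex.re_sum, Finset.mul_sum]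
    refine Finset.sum_congr rfl fun m _ => ?_
    simp [Complex.mul_re]
    ring
  simp_rw [hre]
  rw [lintegral_pi_exp_sum _ (fun m (p : ℝ × ℝ) => a * (v m).re * p.1 + a * (v m).im * p.2) (fun m =>
    ((measurable_fst.const_mul _).add (measurable_snd.const_mul _)))]
  have hfac : ∀ m : Fin M,
      (∫⁻ p : ℝ × ℝ, ENNReal.ofReal (Real.exp ((a * (v m).re) * p.1
        + (a * (v m).im) * p.2)) ∂((gaussianReal 0 (1/2)).prod (gaussianReal 0 (1/2))))
      = ENNReal.ofReal (Real.exp (a^2 * Complex.normSq (v m) / 4)) := by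
    intro m
    have hf1 : Measurable fun x : ℝ => a * (v m).re * x := measurable_id.const_mul _
    have hf2 : Measurable fun x : ℝ => a * (v m).im * x := measurable_id.const_mul _
    rw [lintegral_prod_exp_add _ _ _ _ hf1 hf2,
      lintegral_exp_lin_gaussian, lintegral_exp_lin_gaussian,
      ← ENNReal.ofReal_mul (by positivity), ← Real.exp_add]
    congr 2
    rw [Complex.normSq_apply]
    ring
  simp_rw [hfac, prod_ofReal_exp]
  congr 2
  rw [cnSq, Finset.mul_sum, Finset.sum_div]

lemma key_sq (M : ℕ) (t : ℝ) (ht : 0 ≤ t) :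
    ∫⁻ x, ENNReal.ofReal (Real.exp (-(t * cnSq x))) ∂(stdCGaussian M)
      = ENNReal.ofReal (((1+t) ^ M)⁻¹) := by
  have hcn : Measurable fun x : Fin M → ℂ => cnSq x := by
    unfold cnSq
    exact Finset.measurable_sum _ fun m _ =>
      (Complex.continuous_normSq.measurable).comp (measurable_pi_apply m)

  have hm1 : Measurable fun x : Fin M → ℂ => ENNReal.ofReal (Real.exp (-(t * cnSq x))) :=
    ENNReal.measurable_ofReal.comp (Real.measurable_exp.comp (hcn.const_mul t).neg)
  rw [stdCGaussian, lintegral_map hm1 (measurable_phi M)]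
  have hre : ∀ f : Fin M → ℝ × ℝ,
      -(t * cnSq (fun i => (⟨(f i).1,(f i).2⟩:ℂ)))
        = ∑ m, (-(t * (f m).1^2) + -(t * (f m).2^2)) := by
    intro f
    rw [cnSq, Finset.mul_sum, ← Finset.sum_neg_distrib]
    refine Finset.sum_congr rfl fun m _ => ?_
    rw [Complex.normSq_mk]
    ring
  simp_rw [hre]
  rw [lintegral_pi_exp_sum _ (fun m (p : ℝ × ℝ) => -(t * p.1^2) + -(t * p.2^2)) (fun m =>
    ((measurable_fst.pow_const 2).const_mul t).neg.add
      ((measurable_snd.pow_const 2).const_mul t).neg)]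
  have hfac : ∀ m : Fin M,
      (∫⁻ p : ℝ × ℝ, ENNReal.ofReal (Real.exp (-(t * p.1^2) + -(t * p.2^2)))
        ∂((gaussianReal 0 (1/2)).prod (gaussianReal 0 (1/2))))
      = ENNReal.ofReal ((1+t)⁻¹) := by
    intro m
    have hf1 : Measurable fun x : ℝ => -(t * x ^ 2) := by fun_prop
    rw [lintegral_prod_exp_add _ _ _ _ hf1 hf1,
      lintegral_exp_neg_sq_gaussian t ht,
      ← ENNReal.ofReal_mul (by positivity)]
    congr 1
    rw [← mul_inv]
    congr 1
    exact Real.mul_self_sqrt (by linarith)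
  rw [Finset.prod_congr rfl (fun m _ => hfac m), Finset.prod_const, Finset.card_univ, Fintype.card_fin,
    ← ENNReal.ofReal_pow (by positivity), ← inv_pow]

lemma measurable_cnSq {M : ℕ} : Measurable fun x : Fin M → ℂ => cnSq x := by
  unfold cnSq
  exact Finset.measurable_sum _ fun m _ =>
    Complex.continuous_normSq.measurable.comp (measurable_pi_apply m)

lemma cip_expand {M s : ℕ} (q : ℝ) (h z : Fin M → ℂ) (g : Fin s → Fin M → ℂ) :
    (cip (fun m => (q:ℂ) * (∑ i, g i m) + z m) h).re
      = (∑ i, q * (cip (g i) h).re) + (cip z h).re := by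
  have : cip (fun m => (q:ℂ) * (∑ i, g i m) + z m) h
      = (∑ i, (q:ℂ) * cip (g i) h) + cip z h := by
    simp only [cip, add_mul, Finset.sum_add_distrib, Finset.mul_sum, Finset.sum_mul]
    congr 1
    rw [Finset.sum_comm]
    refine Finset.sum_congr rfl fun m _ => Finset.sum_congr rfl fun i _ => ?_
    ring
  rw [this]
  simp [Complex.add_re, Complex.re_sum, Complex.re_ofReal_mul]

end MFAux

/-- False-alarm probability of the matched-filter detector with threshold
`α√P‖h₁‖²` for a symbol slot in which the user of interest did not transmit and
`s` other users transmitted, averaged over `h₁`: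
`P(Re⟨√P ∑ᵢ gᵢ + z, h₁⟩ > α√P‖h₁‖²) ≤ (1 + Pα²/(Ps+1))^{−M}`. -/
theorem matched_filter_false_alarm_avg (M : ℕ) (hM : 1 ≤ M)
    (s : ℕ) (P : ℝ) (hP : 0 < P) (α : ℝ) (hα0 : 0 ≤ α) (hα1 : α ≤ 1) :
    ((stdCGaussian M).prod
      ((Measure.pi fun _ : Fin s => stdCGaussian M).prod (stdCGaussian M)))
      {ω : (Fin M → ℂ) × ((Fin s → Fin M → ℂ) × (Fin M → ℂ)) |
        α * Real.sqrt P * cnSq ω.1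
          < (cip (fun m => Real.sqrt P * (∑ i, ω.2.1 i m) + ω.2.2 m) ω.1).re}
      ≤ ENNReal.ofReal (((1 + P * α ^ 2 / (P * s + 1)) ^ M)⁻¹) := by
  set q : ℝ := Real.sqrt P with hqdef
  have hq0 : 0 ≤ q := Real.sqrt_nonneg P
  have hq2 : q ^ 2 = P := Real.sq_sqrt hP.le
  have hc0 : (0:ℝ) < P * s + 1 := by positivity
  set c : ℝ := P * s + 1 with hcdef
  set L : ℝ := 2 * α * q / c with hLdef
  have hL0 : 0 ≤ L := by positivity
  set t : ℝ := P * α ^ 2 / c with htdef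
  have ht0 : 0 ≤ t := by positivity
  set μ := ((stdCGaussian M).prod
      ((Measure.pi fun _ : Fin s => stdCGaussian M).prod (stdCGaussian M))) with hμ
  -- the statistic and threshold
  set X : (Fin M → ℂ) × ((Fin s → Fin M → ℂ) × (Fin M → ℂ)) → ℝ :=
    fun ω => (cip (fun m => q * (∑ i, ω.2.1 i m) + ω.2.2 m) ω.1).re with hXdef
  set T : (Fin M → ℂ) × ((Fin s → Fin M → ℂ) × (Fin M → ℂ)) → ℝ :=
    fun ω => α * q * cnSq ω.1 with hTdef
  have hXm : Measurable X := by
    apply Complex.measurable_re.comp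
    unfold cip
    apply Finset.measurable_sum
    intro m _
    refine Measurable.mul ?_ ?_
    · exact (measurable_const.mul (Finset.measurable_sum _ fun i _ =>
        (measurable_pi_apply m).comp ((measurable_pi_apply i).comp
          (measurable_fst.comp measurable_snd)))).add
        ((measurable_pi_apply m).comp (measurable_snd.comp measurable_snd))
    · exact Complex.continuous_conj.measurable.comp
        ((measurable_pi_apply m).comp measurable_fst)
  have hTm : Measurable T := (measurable_cnSq.comp measurable_fst).const_mul (α * q)
  have hA : MeasurableSet {ω : (Fin M → ℂ) × ((Fin s → Fin M → ℂ) × (Fin M → ℂ)) |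
      T ω < X ω} := measurableSet_lt hTm hXm
  have step1 : μ {ω : (Fin M → ℂ) × ((Fin s → Fin M → ℂ) × (Fin M → ℂ)) | T ω < X ω}
      ≤ ∫⁻ ω, ENNReal.ofReal (Real.exp (L * X ω - L * T ω)) ∂μ := by
    rw [← lintegral_indicator_one hA]
    refine lintegral_mono fun ω => ?_
    by_cases hω : ω ∈ {ω : (Fin M → ℂ) × ((Fin s → Fin M → ℂ) × (Fin M → ℂ)) | T ω < X ω}
    · rw [Set.indicator_of_mem hω]
      refine ENNReal.one_le_ofReal.mpr (Real.one_le_exp ?_)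
      have hTX : T ω ≤ X ω := le_of_lt hω
      nlinarith [mul_nonneg hL0 (sub_nonneg.mpr hTX)]
    · rw [Set.indicator_of_notMem hω]
      exact zero_le
  have hsplit : ∀ ω : (Fin M → ℂ) × ((Fin s → Fin M → ℂ) × (Fin M → ℂ)),
      L * X ω - L * T ω
        = (-(L * (α * q * cnSq ω.1)))
          + ((∑ i, (L * q) * (cip (ω.2.1 i) ω.1).re) + L * (cip ω.2.2 ω.1).re) := by
    intro ω
    have hx : X ω = (∑ i, q * (cip (ω.2.1 i) ω.1).re) + (cip ω.2.2 ω.1).re :=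
      cip_expand q ω.1 ω.2.2 ω.2.1
    rw [hx, hTdef, mul_add, Finset.mul_sum]
    simp_rw [← mul_assoc]
    ring
  have hFm : Measurable fun ω : (Fin M → ℂ) × ((Fin s → Fin M → ℂ) × (Fin M → ℂ)) =>
      ENNReal.ofReal (Real.exp (L * X ω - L * T ω)) :=
    ENNReal.measurable_ofReal.comp (Real.measurable_exp.comp
      ((hXm.const_mul L).sub (hTm.const_mul L)))
  have inner : ∀ h : Fin M → ℂ,
      (∫⁻ p : (Fin s → Fin M → ℂ) × (Fin M → ℂ),
        ENNReal.ofReal (Real.exp (L * X (h, p) - L * T (h, p)))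
          ∂((Measure.pi fun _ : Fin s => stdCGaussian M).prod (stdCGaussian M)))
        = ENNReal.ofReal (Real.exp (-(t * cnSq h))) := by
    intro h
    have hpt : ∀ p : (Fin s → Fin M → ℂ) × (Fin M → ℂ),
        L * X (h, p) - L * T (h, p)
          = (-(L * (α * q * cnSq h)))
            + ((∑ i, (L * q) * (cip (p.1 i) h).re) + L * (cip p.2 h).re) :=
      fun p => hsplit (h, p)
    simp_rw [hpt, Real.exp_add, ENNReal.ofReal_mul (Real.exp_nonneg _)]
    have hg1 : Measurable fun g : Fin s → Fin M → ℂ =>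
        ENNReal.ofReal (Real.exp (∑ i, L * q * (cip (g i) h).re)) :=
      ENNReal.measurable_ofReal.comp (Real.measurable_exp.comp
        (Finset.measurable_sum _ fun i _ =>
          ((measurable_cip_re h).comp (measurable_pi_apply i)).const_mul _))
    have hg2 : Measurable fun z : Fin M → ℂ =>
        ENNReal.ofReal (Real.exp (L * (cip z h).re)) :=
      ENNReal.measurable_ofReal.comp (Real.measurable_exp.comp
        ((measurable_cip_re h).const_mul L))
    have hmeas2 : Measurable fun p : (Fin s → Fin M → ℂ) × (Fin M → ℂ) =>
        ENNReal.ofReal (Real.exp (∑ i, L * q * (cip (p.1 i) h).re))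
          * ENNReal.ofReal (Real.exp (L * (cip p.2 h).re)) :=
      (hg1.comp measurable_fst).mul (hg2.comp measurable_snd)
    rw [lintegral_const_mul _ hmeas2,
      lintegral_prod_mul hg1.aemeasurable hg2.aemeasurable]
    have hsum := lintegral_pi_exp_sum (n := s) (stdCGaussian M)
      (fun _ x => L * q * (cip x h).re)
      (fun i => (measurable_cip_re h).const_mul (L * q))
    rw [hsum]
    rw [Finset.prod_congr rfl (fun i _ => key_lin M (L * q) h), Finset.prod_const,
      Finset.card_univ, Fintype.card_fin, key_lin M L h,
      ← ENNReal.ofReal_pow (Real.exp_nonneg _), ← Real.exp_nat_mul,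
      ← ENNReal.ofReal_mul (Real.exp_nonneg _), ← Real.exp_add,
      ← ENNReal.ofReal_mul (Real.exp_nonneg _), ← Real.exp_add]
    congr 1
    have hcne : c ≠ 0 := ne_of_gt hc0
    have hPq : P = q ^ 2 := hq2.symm
    rw [htdef, hLdef, hcdef]
    rw [hPq] at *
    field_simp
    congr 1
    have hc' : q ^ 2 * (s:ℝ) + 1 ≠ 0 := by positivity
    field_simp
    ring
  calc μ {ω : (Fin M → ℂ) × ((Fin s → Fin M → ℂ) × (Fin M → ℂ)) | T ω < X ω}
      ≤ ∫⁻ ω, ENNReal.ofReal (Real.exp (L * X ω - L * T ω)) ∂μ := step1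
    _ = ∫⁻ h, ∫⁻ p : (Fin s → Fin M → ℂ) × (Fin M → ℂ),
          ENNReal.ofReal (Real.exp (L * X (h, p) - L * T (h, p)))
          ∂((Measure.pi fun _ : Fin s => stdCGaussian M).prod (stdCGaussian M))
          ∂(stdCGaussian M) := by
        rw [hμ]; exact lintegral_prod _ hFm.aemeasurable
    _ = ∫⁻ h, ENNReal.ofReal (Real.exp (-(t * cnSq h))) ∂(stdCGaussian M) :=
        lintegral_congr inner
    _ = ENNReal.ofReal (((1 + t) ^ M)⁻¹) := key_sq M t ht0
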